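/- arXiv:1612.01209 — 7 statements merged into one kernel-verified Lean document; each statement's English description precedes it below -/
import Mathlib

section
/- If $0 < w_I \leq \frac{r_0 w_V v_2}{r_I(v_1+v_2)}$ and $r_I > r_0$, with all quantities positive, then for any nonnegative reals $l_1,\dots,l_{n-1}$, $\frac{\sum_{i=1}^{n-1}\min\{l_i, 2r_I\} + 2r_I}{v_2} w_I \leq \frac{\sum_{i=1}^{n-1}\min\{l_i, 2r_0\} + 2r_0}{v_1+v_2} w_V$. -/
theorem stmt0 (n : ℕ) (hn : 1 ≤ n) (rI r0 v1 v2 wI wV : ℝ)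
    (hr0 : 0 < r0) (hrIr0 : r0 < rI) (hv1 : 0 < v1) (hv2 : 0 < v2)
    (hwV : 0 < wV) (hwI : 0 < wI)
    (hwIle : wI ≤ r0 * wV * v2 / (rI * (v1 + v2)))
    (l : ℕ → ℝ) (hl : ∀ i, 0 ≤ l i) :
    ((∑ i ∈ Finset.Ico 1 n, min (l i) (2 * rI)) + 2 * rI) / v2 * wI ≤
      ((∑ i ∈ Finset.Ico 1 n, min (l i) (2 * r0)) + 2 * r0) / (v1 + v2) * wV := by
  have hrI : (0:ℝ) < rI := hr0.trans hrIr0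
  have hv12 : (0:ℝ) < v1 + v2 := by linarith
  have hkey : (∑ i ∈ Finset.Ico 1 n, min (l i) (2 * rI)) + 2 * rI ≤
      (rI / r0) * ((∑ i ∈ Finset.Ico 1 n, min (l i) (2 * r0)) + 2 * r0) := by
    have hsum : ∑ i ∈ Finset.Ico 1 n, min (l i) (2 * rI) ≤
        (rI / r0) * ∑ i ∈ Finset.Ico 1 n, min (l i) (2 * r0) := by
      rw [Finset.mul_sum]
      apply Finset.sum_le_sum
      intro i _
      rcases le_total (l i) (2 * r0) with h | h
      · rw [min_eq_left h, min_eq_left (h.trans (by nlinarith))]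
        rw [div_mul_eq_mul_div, le_div_iff₀ hr0]
        nlinarith [hl i]
      · rw [min_eq_right h]
        have : min (l i) (2 * rI) ≤ 2 * rI := min_le_right _ _
        rw [div_mul_eq_mul_div, le_div_iff₀ hr0]
        nlinarith
    have : rI / r0 * (2 * r0) = 2 * rI := by field_simp
    nlinarith [hsum]
  have hSI : 0 ≤ (∑ i ∈ Finset.Ico 1 n, min (l i) (2 * rI)) + 2 * rI := by
    have : 0 ≤ ∑ i ∈ Finset.Ico 1 n, min (l i) (2 * rI) :=
      Finset.sum_nonneg fun i _ => le_min (hl i) (by linarith)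
    linarith
  have hS0 : 0 ≤ (∑ i ∈ Finset.Ico 1 n, min (l i) (2 * r0)) + 2 * r0 := by
    have : 0 ≤ ∑ i ∈ Finset.Ico 1 n, min (l i) (2 * r0) :=
      Finset.sum_nonneg fun i _ => le_min (hl i) (by linarith)
    linarith
  calc ((∑ i ∈ Finset.Ico 1 n, min (l i) (2 * rI)) + 2 * rI) / v2 * wI
      ≤ (rI / r0) * ((∑ i ∈ Finset.Ico 1 n, min (l i) (2 * r0)) + 2 * r0) / v2 *
        (r0 * wV * v2 / (rI * (v1 + v2))) := by
        apply mul_le_mul (by gcongr) hwIle hwI.le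
        positivity
    _ = ((∑ i ∈ Finset.Ico 1 n, min (l i) (2 * r0)) + 2 * r0) / (v1 + v2) * wV := by
        field_simp
end

section
/- Consider the linear program: maximize $\sum_{i=1}^n Y_i$ subject to $0 \le D_i \le \frac{2r_I}{v_2}w_I$ for all $i$; $\sum_{i=k_1}^{k_2} D_i \le \frac{\sum_{i=k_1}^{k_2-1}\min\{l_i,2r_I\} + 2r_I}{v_2}w_I$ for all $1\le k_1\le k_2\le n$; $0 \le Y_i \le \frac{2r_0}{v_1+v_2}w_V$ for all $i$; $Y_i \le D_i$ for all $i$; and $\sum_{i=k_1}^{k_2} Y_i \le \frac{\sum_{i=k_1}^{k_2-1}\min\{l_i,2r_0\} + 2r_0}{v_1+v_2}w_V$ for all $1\le k_1\le k_2\le n$. If $0 < w_I \le \frac{r_0 w_V v_2}{r_I(v_1+v_2)}$ and $r_I > r_0$, then the optimal value equals $\frac{\sum_{i=1}^{n-1}\min\{l_i,2r_I\} + 2r_I}{v_2}w_I$. -/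
lemma sum_shift (f : ℕ → ℝ) (a b : ℕ) :
    ∑ i ∈ Finset.Icc (a+1) b, f (i-1) = ∑ i ∈ Finset.Ico a b, f i := by
  rw [← Finset.Ico_add_one_right_eq_Icc]
  rw [Finset.sum_Ico_eq_sum_range, Finset.sum_Ico_eq_sum_range]
  rw [show b + 1 - (a+1) = b - a by omega]
  exact Finset.sum_congr rfl fun i _ => by congr 1; omega

/-- Feasibility for the LP: variables `D i`, `Y i` for `i = 1,…,n`, with
inter-vehicle distances `l i` between helper `i` and helper `i+1`. -/
def Feasible (n : ℕ) (l D Y : ℕ → ℝ) (rI r0 v1 v2 wI wV : ℝ) : Prop :=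
  (∀ i, 1 ≤ i → i ≤ n → 0 ≤ D i ∧ D i ≤ 2 * rI / v2 * wI) ∧
  (∀ k1 k2, 1 ≤ k1 → k1 ≤ k2 → k2 ≤ n →
    ∑ i ∈ Finset.Icc k1 k2, D i ≤
      ((∑ i ∈ Finset.Ico k1 k2, min (l i) (2 * rI)) + 2 * rI) / v2 * wI) ∧
  (∀ i, 1 ≤ i → i ≤ n → 0 ≤ Y i ∧ Y i ≤ 2 * r0 / (v1 + v2) * wV) ∧
  (∀ i, 1 ≤ i → i ≤ n → Y i ≤ D i) ∧
  (∀ k1 k2, 1 ≤ k1 → k1 ≤ k2 → k2 ≤ n →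
    ∑ i ∈ Finset.Icc k1 k2, Y i ≤
      ((∑ i ∈ Finset.Ico k1 k2, min (l i) (2 * r0)) + 2 * r0) / (v1 + v2) * wV)

theorem stmt2 (n : ℕ) (hn : 1 ≤ n) (rI r0 v1 v2 wI wV : ℝ)
    (hr0 : 0 < r0) (hrIr0 : r0 < rI) (hv1 : 0 < v1) (hv2 : 0 < v2)
    (hwV : 0 < wV) (hwI : 0 < wI)
    (hwIle : wI ≤ r0 * wV * v2 / (rI * (v1 + v2)))
    (l : ℕ → ℝ) (hl : ∀ i, 0 ≤ l i) :
    IsGreatest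
      {S : ℝ | ∃ D Y : ℕ → ℝ, Feasible n l D Y rI r0 v1 v2 wI wV ∧
        S = ∑ i ∈ Finset.Icc 1 n, Y i}
      (((∑ i ∈ Finset.Ico 1 n, min (l i) (2 * rI)) + 2 * rI) / v2 * wI) := by
  have hrI : (0:ℝ) < rI := lt_trans hr0 hrIr0
  have hv12 : (0:ℝ) < v1 + v2 := by linarith
  have hwIle' : wI * (rI * (v1 + v2)) ≤ r0 * wV * v2 :=
    (le_div_iff₀ (by positivity)).mp hwIle
  have hkey : 2 * rI / v2 * wI ≤ 2 * r0 / (v1 + v2) * wV := by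
    rw [div_mul_eq_mul_div, div_mul_eq_mul_div, div_le_div_iff₀ hv2 hv12]
    nlinarith
  have hminkey : ∀ x : ℝ, 0 ≤ x →
      min x (2 * rI) / v2 * wI ≤ min x (2 * r0) / (v1 + v2) * wV := by
    intro x hx
    have hm : 0 ≤ min x (2 * rI) := le_min hx (by linarith)
    have hm' : 0 ≤ min x (2 * r0) := le_min hx (by linarith)
    have h1 : min x (2 * rI) * r0 ≤ min x (2 * r0) * rI := by
      rcases le_total x (2 * r0) with h | h
      · rw [min_eq_left h, min_eq_left (by linarith : x ≤ 2 * rI)]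
        nlinarith
      · rw [min_eq_right h]
        nlinarith [min_le_right x (2 * rI)]
    rw [div_mul_eq_mul_div, div_mul_eq_mul_div, div_le_div_iff₀ hv2 hv12]
    nlinarith [mul_le_mul_of_nonneg_left hwIle' hm,
      mul_le_mul_of_nonneg_right h1 (by positivity : (0:ℝ) ≤ wV * v2)]
  set D : ℕ → ℝ :=
    fun i => (if i = 1 then 2 * rI else min (l (i-1)) (2 * rI)) / v2 * wI with hDdef
  have hDnn : ∀ i, 0 ≤ D i := by
    intro i
    simp only [hDdef]
    split
    · positivity
    · have := le_min (hl (i-1)) (by linarith : (0:ℝ) ≤ 2 * rI)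
      positivity
  have hDle : ∀ i, D i ≤ 2 * rI / v2 * wI := by
    intro i
    simp only [hDdef]
    split
    · exact le_refl _
    · gcongr
      exact min_le_right _ _
  have hsum : ∀ k1 k2, 1 ≤ k1 → k1 ≤ k2 →
      ∑ i ∈ Finset.Icc k1 k2, D i
        = D k1 + ∑ i ∈ Finset.Ico k1 k2, min (l i) (2 * rI) / v2 * wI := by
    intro k1 k2 h1 h2
    rw [← Finset.Ioc_insert_left h2, Finset.sum_insert (by simp)]
    congr 1
    rw [← Finset.Icc_add_one_left_eq_Ioc]
    rw [show ∑ i ∈ Finset.Icc (k1+1) k2, D i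
        = ∑ i ∈ Finset.Icc (k1+1) k2, (fun j => min (l j) (2 * rI) / v2 * wI) (i-1) from
      Finset.sum_congr rfl fun i hi => by
        simp only [Finset.mem_Icc] at hi
        simp [hDdef, show i ≠ 1 by omega]]
    exact sum_shift (fun j => min (l j) (2 * rI) / v2 * wI) k1 k2
  constructor
  · refine ⟨D, D, ⟨fun i _ _ => ⟨hDnn i, hDle i⟩, ?_, ?_, fun i _ _ => le_refl _, ?_⟩, ?_⟩
    · intro k1 k2 h1 h2 _
      rw [hsum k1 k2 h1 h2, add_div, add_mul, Finset.sum_div, Finset.sum_mul]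
      have := hDle k1
      linarith
    · intro i _ _
      exact ⟨hDnn i, le_trans (hDle i) hkey⟩
    · intro k1 k2 h1 h2 _
      rw [hsum k1 k2 h1 h2, add_div, add_mul, Finset.sum_div, Finset.sum_mul]
      have h3 : D k1 ≤ 2 * r0 / (v1 + v2) * wV := le_trans (hDle k1) hkey
      have h4 : ∑ i ∈ Finset.Ico k1 k2, min (l i) (2 * rI) / v2 * wI
          ≤ ∑ i ∈ Finset.Ico k1 k2, min (l i) (2 * r0) / (v1 + v2) * wV :=
        Finset.sum_le_sum fun i _ => hminkey _ (hl i)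
      linarith
    · rw [hsum 1 n le_rfl hn, add_div, add_mul, Finset.sum_div, Finset.sum_mul]
      have hD1 : D 1 = 2 * rI / v2 * wI := by simp [hDdef]
      rw [hD1]; ring
  · rintro S ⟨D', Y, ⟨hD1, hD2, _, hYD, _⟩, rfl⟩
    calc ∑ i ∈ Finset.Icc 1 n, Y i ≤ ∑ i ∈ Finset.Icc 1 n, D' i := by
          refine Finset.sum_le_sum fun i hi => ?_
          rw [Finset.mem_Icc] at hi
          exact hYD i hi.1 hi.2
      _ ≤ _ := hD2 1 n le_rfl hn le_rfl
end

section
/- Under the constraints of the same linear program (maximize $\sum_{i=1}^n Y_i$ subject to the V2I and V2V constraints), if $w_I \ge \frac{w_V v_2}{v_1+v_2}$ and $r_I > r_0 > 0$, then the optimal value equals $\frac{\sum_{i=1}^{n-1}\min\{l_i,2r_0\} + 2r_0}{v_1+v_2}w_V$. -/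
lemma shift_sum (k1 k2 : ℕ) (h12 : k1 ≤ k2) (e : ℕ → ℝ) :
    ∑ i ∈ Finset.Icc k1 k2, e (i - 1)
      = e (k1 - 1) + ∑ j ∈ Finset.Ico k1 k2, e j := by
  have h : Finset.Icc k1 k2 = insert k1 (Finset.Ico (k1+1) (k2+1)) := by
    ext x; simp [Finset.mem_Icc, Finset.mem_Ico]; try omega
  rw [h, Finset.sum_insert (by simp [Finset.mem_Ico]; try omega)]
  congr 1
  have : Finset.Ico (k1+1) (k2+1) = Finset.image (· + 1) (Finset.Ico k1 k2) := by
    ext x; simp [Finset.mem_Ico]; try omega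
  rw [this, Finset.sum_image (by intro a _ b _ h; simp only at h; try omega)]
  exact Finset.sum_congr rfl (fun j hj => by congr 1)

theorem stmt3 (n : ℕ) (hn : 1 ≤ n) (rI r0 v1 v2 wI wV : ℝ)
    (hr0 : 0 < r0) (hrIr0 : r0 < rI) (hv1 : 0 < v1) (hv2 : 0 < v2)
    (hwV : 0 < wV) (hwI : 0 < wI)
    (hwIge : wV * v2 / (v1 + v2) ≤ wI)
    (l : ℕ → ℝ) (hl : ∀ i, 0 ≤ l i) :
    IsGreatest
      {S : ℝ | ∃ D Y : ℕ → ℝ, Feasible n l D Y rI r0 v1 v2 wI wV ∧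
        S = ∑ i ∈ Finset.Icc 1 n, Y i}
      (((∑ i ∈ Finset.Ico 1 n, min (l i) (2 * r0)) + 2 * r0) / (v1 + v2) * wV) := by
  have hv12 : 0 < v1 + v2 := by linarith
  set c : ℝ := wV / (v1 + v2) with hc
  have hc0 : 0 < c := div_pos hwV hv12
  have hcle : c ≤ wI / v2 := by
    rw [hc, div_le_div_iff₀ hv12 hv2]
    calc wV * v2 = wV * v2 / (v1 + v2) * (v1 + v2) := by field_simp
    _ ≤ wI * (v1 + v2) := by
        apply mul_le_mul_of_nonneg_right hwIge (le_of_lt hv12)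
  set e : ℕ → ℝ := fun j => if j = 0 then 2 * r0 else min (l j) (2 * r0) with he
  have he0 : ∀ j, 0 ≤ e j := by
    intro j
    simp only [he]; split
    · linarith
    · exact le_min (hl j) (by linarith)
  have heub : ∀ j, e j ≤ 2 * r0 := by
    intro j
    simp only [he]; split
    · exact le_rfl
    · exact min_le_right _ _
  set Y : ℕ → ℝ := fun i => e (i - 1) * c with hY
  have hsum : ∀ k1 k2 : ℕ, 1 ≤ k1 → k1 ≤ k2 →
      ∑ i ∈ Finset.Icc k1 k2, Y i
        = (e (k1 - 1) + ∑ j ∈ Finset.Ico k1 k2, min (l j) (2 * r0)) * c := by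
    intro k1 k2 h1 h12
    rw [hY]
    rw [show (∑ i ∈ Finset.Icc k1 k2, e (i-1) * c)
        = (∑ i ∈ Finset.Icc k1 k2, e (i-1)) * c from (Finset.sum_mul ..).symm]
    rw [shift_sum k1 k2 h12 e]
    congr 2
    refine Finset.sum_congr rfl fun j hj => ?_
    have : j ≠ 0 := by simp [Finset.mem_Ico] at hj; omega
    simp [he, this]
  -- bounds on individual Y
  have hYnn : ∀ i, 0 ≤ Y i := fun i => mul_nonneg (he0 _) hc0.le
  have hYub : ∀ i, Y i ≤ 2 * r0 / (v1 + v2) * wV := by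
    intro i
    have : 2 * r0 / (v1 + v2) * wV = 2 * r0 * c := by rw [hc]; ring
    rw [this]
    exact mul_le_mul_of_nonneg_right (heub _) hc0.le
  have hDub : ∀ i, Y i ≤ 2 * rI / v2 * wI := by
    intro i
    have h1 : Y i ≤ 2 * r0 * c := mul_le_mul_of_nonneg_right (heub _) hc0.le
    have h2 : 2 * r0 * c ≤ 2 * rI * (wI / v2) :=
      mul_le_mul (by linarith) hcle hc0.le (by linarith)
    have h3 : 2 * rI * (wI / v2) = 2 * rI / v2 * wI := by ring
    linarith
  have hfeas : Feasible n l Y Y rI r0 v1 v2 wI wV := by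
    refine ⟨fun i _ _ => ⟨hYnn i, hDub i⟩, ?_, fun i _ _ => ⟨hYnn i, hYub i⟩,
      fun i _ _ => le_rfl, ?_⟩
    · -- V2I interval constraint
      intro k1 k2 h1 h12 h2n
      rw [hsum k1 k2 h1 h12]
      have hA : e (k1 - 1) ≤ 2 * rI := le_trans (heub _) (by linarith)
      have hS : ∑ j ∈ Finset.Ico k1 k2, min (l j) (2 * r0)
          ≤ ∑ j ∈ Finset.Ico k1 k2, min (l j) (2 * rI) := by
        refine Finset.sum_le_sum fun j _ => ?_
        exact min_le_min le_rfl (by linarith)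
      have hSnn : (0:ℝ) ≤ ∑ j ∈ Finset.Ico k1 k2, min (l j) (2 * r0) :=
        Finset.sum_nonneg fun j _ => le_min (hl j) (by linarith)
      calc (e (k1-1) + ∑ j ∈ Finset.Ico k1 k2, min (l j) (2 * r0)) * c
          ≤ ((∑ j ∈ Finset.Ico k1 k2, min (l j) (2 * rI)) + 2 * rI) * (wI / v2) := by
            apply mul_le_mul (by linarith) hcle hc0.le
            have : (0:ℝ) ≤ ∑ j ∈ Finset.Ico k1 k2, min (l j) (2 * rI) :=
              Finset.sum_nonneg fun j _ => le_min (hl j) (by linarith)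
            linarith
      _ = ((∑ j ∈ Finset.Ico k1 k2, min (l j) (2 * rI)) + 2 * rI) / v2 * wI := by ring
    · -- V2V interval constraint
      intro k1 k2 h1 h12 h2n
      rw [hsum k1 k2 h1 h12]
      have hA : e (k1 - 1) ≤ 2 * r0 := heub _
      calc (e (k1-1) + ∑ j ∈ Finset.Ico k1 k2, min (l j) (2 * r0)) * c
          ≤ ((∑ j ∈ Finset.Ico k1 k2, min (l j) (2 * r0)) + 2 * r0) * c := by
            apply mul_le_mul_of_nonneg_right (by linarith) hc0.le
      _ = ((∑ j ∈ Finset.Ico k1 k2, min (l j) (2 * r0)) + 2 * r0) / (v1 + v2) * wV := by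
            rw [hc]; ring
  constructor
  · refine ⟨Y, Y, hfeas, ?_⟩
    rw [hsum 1 n le_rfl hn]
    have : e (1 - 1) = 2 * r0 := by simp [he]
    rw [this, hc]; ring
  · rintro S ⟨D, Y', hF, rfl⟩
    exact hF.2.2.2.2 1 n le_rfl hn le_rfl
end

section
/- The assignment $Y_i = D_i = \frac{\min\{l_i, 2r_I\}}{v_2}w_I$ for $i=1,\dots,n-1$ and $Y_n = D_n = \frac{2r_I}{v_2}w_I$ is feasible for the linear program (satisfies all five constraint families) whenever $0 < w_I \le \frac{r_0 w_V v_2}{r_I(v_1+v_2)}$ and $r_I > r_0 > 0$. -/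
theorem stmt4 (n : ℕ) (hn : 1 ≤ n) (rI r0 v1 v2 wI wV : ℝ)
    (hr0 : 0 < r0) (hrIr0 : r0 < rI) (hv1 : 0 < v1) (hv2 : 0 < v2)
    (hwV : 0 < wV) (hwI : 0 < wI)
    (hwIle : wI ≤ r0 * wV * v2 / (rI * (v1 + v2)))
    (l : ℕ → ℝ) (hl : ∀ i, 0 ≤ l i) :
    Feasible n l
      (fun i => if i = n then 2 * rI / v2 * wI else min (l i) (2 * rI) / v2 * wI)
      (fun i => if i = n then 2 * rI / v2 * wI else min (l i) (2 * rI) / v2 * wI)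
      rI r0 v1 v2 wI wV := by
  have hv12 : 0 < v1 + v2 := by linarith
  have hrI : 0 < rI := lt_trans hr0 hrIr0
  have hcl : wI * (rI * (v1 + v2)) ≤ r0 * wV * v2 := by
    rw [div_eq_mul_inv] at hwIle
    have := mul_le_mul_of_nonneg_right hwIle (le_of_lt (mul_pos hrI hv12))
    calc wI * (rI * (v1 + v2)) ≤ r0 * wV * v2 * (rI * (v1 + v2))⁻¹ * (rI * (v1 + v2)) := this
      _ = r0 * wV * v2 := by field_simp
  -- key scalar inequality
  have hq : wI * (v1 + v2) ≤ wV * v2 := by nlinarith [hcl, mul_pos hwV hv2, mul_pos (mul_pos hwV hv2) (sub_pos.mpr hrIr0)]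
  have hkey2 : 2 * rI / v2 * wI ≤ 2 * r0 / (v1 + v2) * wV := by
    rw [div_mul_eq_mul_div, div_mul_eq_mul_div, div_le_div_iff₀ hv2 hv12]
    nlinarith
  have hterm : ∀ a : ℝ, 0 ≤ a →
      min a (2 * rI) / v2 * wI ≤ min a (2 * r0) / (v1 + v2) * wV := by
    intro a ha
    rcases le_total a (2 * r0) with h | h
    · rw [min_eq_left (by linarith), min_eq_left h,
        div_mul_eq_mul_div, div_mul_eq_mul_div, div_le_div_iff₀ hv2 hv12]
      nlinarith [mul_le_mul_of_nonneg_left hq ha]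
    · rw [min_eq_right h]
      calc min a (2 * rI) / v2 * wI ≤ 2 * rI / v2 * wI := by
            gcongr
            · exact min_le_right _ _
        _ ≤ 2 * r0 / (v1 + v2) * wV := hkey2
  have hminnn : ∀ i, 0 ≤ min (l i) (2 * rI) := fun i => le_min (hl i) (by linarith)
  have hD0 : ∀ i, 0 ≤ (if i = n then 2 * rI / v2 * wI
      else min (l i) (2 * rI) / v2 * wI) := by
    intro i
    split
    · positivity
    · have := hminnn i; positivity
  have hDtop : ∀ i, (if i = n then 2 * rI / v2 * wI
      else min (l i) (2 * rI) / v2 * wI) ≤ 2 * rI / v2 * wI := by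
    intro i
    split
    · exact le_refl _
    · gcongr
      exact min_le_right _ _
  refine ⟨fun i _ _ => ⟨hD0 i, hDtop i⟩, ?_, fun i _ _ =>
    ⟨hD0 i, le_trans (hDtop i) hkey2⟩, fun i _ _ => le_refl _, ?_⟩
  · intro k1 k2 hk1 hk12 hk2n
    rw [← Finset.Ico_add_one_right_eq_Icc, Finset.sum_Ico_succ_top hk12]
    have hsum : ∑ i ∈ Finset.Ico k1 k2,
        (if i = n then 2 * rI / v2 * wI else min (l i) (2 * rI) / v2 * wI)
        = (∑ i ∈ Finset.Ico k1 k2, min (l i) (2 * rI)) / v2 * wI := by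
      rw [Finset.sum_div, Finset.sum_mul]
      refine Finset.sum_congr rfl fun i hi => ?_
      rw [if_neg (Nat.ne_of_lt (lt_of_lt_of_le (Finset.mem_Ico.mp hi).2 hk2n))]
    rw [hsum, add_div, add_mul]
    exact add_le_add_right (hDtop k2) _
  · intro k1 k2 hk1 hk12 hk2n
    rw [← Finset.Ico_add_one_right_eq_Icc, Finset.sum_Ico_succ_top hk12]
    rw [add_div, add_mul]
    refine add_le_add ?_ (le_trans (hDtop k2) hkey2)
    rw [Finset.sum_div, Finset.sum_mul]
    refine Finset.sum_le_sum fun i hi => ?_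
    rw [if_neg (Nat.ne_of_lt (lt_of_lt_of_le (Finset.mem_Ico.mp hi).2 hk2n))]
    exact hterm (l i) (hl i)
end

section
/- The assignment $D_i = \frac{\min\{l_i, 2r_I\}}{v_2}w_I$, $Y_i = \frac{\min\{l_i, 2r_0\}}{v_1+v_2}w_V$ for $i=1,\dots,n-1$, and $D_n = \frac{2r_I}{v_2}w_I$, $Y_n = \frac{2r_0}{v_1+v_2}w_V$, is feasible for the linear program whenever $w_I \ge \frac{w_V v_2}{v_1+v_2}$ and $r_I > r_0 > 0$. -/
lemma sum_bound_aux (n k1 k2 : ℕ) (hk : k1 ≤ k2) (hk2 : k2 ≤ n)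
    (r c w : ℝ) (hr : 0 < r) (hc : 0 < c) (hw : 0 ≤ w) (l : ℕ → ℝ) :
    ∑ i ∈ Finset.Icc k1 k2, (if i = n then 2 * r / c * w else min (l i) (2 * r) / c * w) ≤
      ((∑ i ∈ Finset.Ico k1 k2, min (l i) (2 * r)) + 2 * r) / c * w := by
  rw [← Finset.Ico_add_one_right_eq_Icc, Finset.sum_Ico_succ_top (by omega : k1 ≤ k2)]
  have h1 : ∑ i ∈ Finset.Ico k1 k2,
      (if i = n then 2 * r / c * w else min (l i) (2 * r) / c * w)
      = ∑ i ∈ Finset.Ico k1 k2, min (l i) (2 * r) / c * w := by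
    apply Finset.sum_congr rfl
    intro i hi
    rw [Finset.mem_Ico] at hi
    rw [if_neg (by omega)]
  rw [h1, add_div, add_mul, ← Finset.sum_mul, ← Finset.sum_div]
  gcongr
  split
  · exact le_refl _
  · gcongr
    exact min_le_right _ _

theorem stmt5 (n : ℕ) (hn : 1 ≤ n) (rI r0 v1 v2 wI wV : ℝ)
    (hr0 : 0 < r0) (hrIr0 : r0 < rI) (hv1 : 0 < v1) (hv2 : 0 < v2)
    (hwV : 0 < wV) (hwI : 0 < wI)
    (hwIge : wV * v2 / (v1 + v2) ≤ wI)
    (l : ℕ → ℝ) (hl : ∀ i, 0 ≤ l i) :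
    Feasible n l
      (fun i => if i = n then 2 * rI / v2 * wI else min (l i) (2 * rI) / v2 * wI)
      (fun i => if i = n then 2 * r0 / (v1 + v2) * wV
                else min (l i) (2 * r0) / (v1 + v2) * wV)
      rI r0 v1 v2 wI wV := by
  have hrI : (0:ℝ) < rI := hr0.trans hrIr0
  have hv12 : (0:ℝ) < v1 + v2 := by linarith
  refine ⟨?_, ?_, ?_, ?_, ?_⟩
  · intro i h1 h2
    dsimp only
    constructor
    · split
      · positivity
      · have : (0:ℝ) ≤ min (l i) (2 * rI) := le_min (hl i) (by positivity)
        positivity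
    · split
      · exact le_refl _
      · gcongr
        exact min_le_right _ _
  · intro k1 k2 h1 h2 h3
    exact sum_bound_aux n k1 k2 h2 h3 rI v2 wI hrI hv2 hwI.le l
  · intro i h1 h2
    dsimp only
    constructor
    · split
      · positivity
      · have : (0:ℝ) ≤ min (l i) (2 * r0) := le_min (hl i) (by positivity)
        positivity
    · split
      · exact le_refl _
      · gcongr
        exact min_le_right _ _
  · intro i h1 h2
    have key : ∀ a b : ℝ, 0 ≤ a → a ≤ b → a / (v1 + v2) * wV ≤ b / v2 * wI := by
      intro a b ha hab
      have hw2 : wV * v2 ≤ wI * (v1 + v2) := (div_le_iff₀ hv12).mp hwIge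
      have hw3 : wV / (v1 + v2) ≤ wI / v2 := by
        rw [div_le_div_iff₀ hv12 hv2]; linarith
      calc a / (v1 + v2) * wV = a * (wV / (v1 + v2)) := by ring
        _ ≤ b * (wI / v2) := mul_le_mul hab hw3 (by positivity) (ha.trans hab)
        _ = b / v2 * wI := by ring
    dsimp only
    split
    · exact key (2 * r0) (2 * rI) (by positivity) (by linarith)
    · exact key _ _ (le_min (hl i) (by positivity))
        (min_le_min (le_refl _) (by linarith))
  · intro k1 k2 h1 h2 h3
    exact sum_bound_aux n k1 k2 h2 h3 r0 (v1 + v2) wV hr0 hv12 hwV.le l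
end

section
/- If $\frac{r_0 w_V v_2}{r_I(v_1+v_2)} < w_I < \frac{w_V v_2}{v_1+v_2}$ and $r_I > r_0 > 0$, then the optimal value of the linear program is at least $\sum_{i=1}^{n-1}\min\left\{\frac{l_i}{v_2}w_I, \frac{2r_0}{v_1+v_2}w_V\right\} + \frac{2r_0}{v_1+v_2}w_V$. -/
theorem stmt7 (n : ℕ) (hn : 1 ≤ n) (rI r0 v1 v2 wI wV : ℝ)
    (hr0 : 0 < r0) (hrIr0 : r0 < rI) (hv1 : 0 < v1) (hv2 : 0 < v2)
    (hwV : 0 < wV) (hwI : 0 < wI)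
    (hlo : r0 * wV * v2 / (rI * (v1 + v2)) < wI)
    (hhi : wI < wV * v2 / (v1 + v2))
    (l : ℕ → ℝ) (hl : ∀ i, 0 ≤ l i) :
    ∃ D Y : ℕ → ℝ, Feasible n l D Y rI r0 v1 v2 wI wV ∧
      (∑ i ∈ Finset.Ico 1 n, min (l i / v2 * wI) (2 * r0 / (v1 + v2) * wV)) +
        2 * r0 / (v1 + v2) * wV ≤ ∑ i ∈ Finset.Icc 1 n, Y i := by
  have hv12 : (0:ℝ) < v1 + v2 := by linarith
  set B : ℝ := 2 * r0 / (v1 + v2) * wV with hBdef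
  have hBpos : 0 < B := by positivity
  have hlo' : r0 * wV * v2 < wI * (rI * (v1 + v2)) := by
    rwa [div_lt_iff₀ (mul_pos (hr0.trans hrIr0) hv12)] at hlo
  have hhi' : wI * (v1 + v2) < wV * v2 := by
    rwa [lt_div_iff₀ hv12] at hhi
  have hBI : B ≤ 2 * rI / v2 * wI := by
    rw [hBdef, div_mul_eq_mul_div, div_mul_eq_mul_div, div_le_div_iff₀ hv12 hv2]
    nlinarith [hrIr0, hr0]
  -- the construction
  set Y : ℕ → ℝ := fun i => if i = 1 then B else min (l (i - 1) / v2 * wI) B with hYdef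
  have hYnonneg : ∀ i, 0 ≤ Y i := by
    intro i
    rw [hYdef]
    dsimp only
    split
    · exact hBpos.le
    · exact le_min (mul_nonneg (div_nonneg (hl _) hv2.le) hwI.le) hBpos.le
  have hYB : ∀ i, Y i ≤ B := by
    intro i
    rw [hYdef]; dsimp only; split
    · exact le_refl _
    · exact min_le_right _ _
  have hYsucc : ∀ i, 1 ≤ i → Y (i + 1) = min (l i / v2 * wI) B := by
    intro i hi
    rw [hYdef]; dsimp only
    rw [if_neg (by omega)]
    simp
  have hmD : ∀ x : ℝ, 0 ≤ x → min (x / v2 * wI) B ≤ min x (2 * rI) / v2 * wI := by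
    intro x hx
    rcases le_total x (2 * rI) with h | h
    · rw [min_eq_left h]
      exact min_le_left _ _
    · rw [min_eq_right h]
      exact (min_le_right _ _).trans hBI
  have hmY : ∀ x : ℝ, 0 ≤ x → min (x / v2 * wI) B ≤ min x (2 * r0) / (v1 + v2) * wV := by
    intro x hx
    rcases le_total x (2 * r0) with h | h
    · rw [min_eq_left h]
      refine (min_le_left _ _).trans ?_
      rw [div_mul_eq_mul_div, div_mul_eq_mul_div, div_le_div_iff₀ hv2 hv12]
      nlinarith
    · rw [min_eq_right h]
      exact min_le_right _ _
  have hsum : ∀ a b : ℕ, ∑ i ∈ Finset.Ioc a b, Y i = ∑ i ∈ Finset.Ico a b, Y (i + 1) := by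
    intro a b
    rw [← Finset.Icc_add_one_left_eq_Ioc, ← Finset.Ico_add_one_right_eq_Icc,
      ← Finset.map_add_right_Ico a b 1, Finset.sum_map]
    rfl
  have hsplit : ∀ a b : ℕ, a ≤ b → ∑ i ∈ Finset.Icc a b, Y i
      = Y a + ∑ i ∈ Finset.Ico a b, Y (i + 1) := by
    intro a b hab
    rw [← hsum, ← Finset.sum_insert (by simp), Finset.Ioc_insert_left hab]
  refine ⟨Y, Y, ⟨?_, ?_, ?_, ?_, ?_⟩, ?_⟩
  · intro i _ _
    exact ⟨hYnonneg i, (hYB i).trans hBI⟩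
  · intro k1 k2 hk1 hk12 hk2n
    rw [hsplit k1 k2 hk12, add_div, add_mul, Finset.sum_div, Finset.sum_mul]
    have h1 : Y k1 ≤ 2 * rI / v2 * wI := (hYB k1).trans hBI
    have h2 : ∑ i ∈ Finset.Ico k1 k2, Y (i + 1)
        ≤ ∑ i ∈ Finset.Ico k1 k2, min (l i) (2 * rI) / v2 * wI := by
      refine Finset.sum_le_sum fun i hi => ?_
      have hik : 1 ≤ i := le_trans hk1 (Finset.mem_Ico.mp hi).1
      rw [hYsucc i hik]
      exact hmD (l i) (hl i)
    linarith
  · intro i _ _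
    exact ⟨hYnonneg i, hYB i⟩
  · intro i _ _; exact le_refl _
  · intro k1 k2 hk1 hk12 hk2n
    rw [hsplit k1 k2 hk12, add_div, add_mul, Finset.sum_div, Finset.sum_mul]
    have h1 : Y k1 ≤ 2 * r0 / (v1 + v2) * wV := hYB k1
    have h2 : ∑ i ∈ Finset.Ico k1 k2, Y (i + 1)
        ≤ ∑ i ∈ Finset.Ico k1 k2, min (l i) (2 * r0) / (v1 + v2) * wV := by
      refine Finset.sum_le_sum fun i hi => ?_
      have hik : 1 ≤ i := le_trans hk1 (Finset.mem_Ico.mp hi).1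
      rw [hYsucc i hik]
      exact hmY (l i) (hl i)
    linarith
  · rw [hsplit 1 n hn]
    have hY1 : Y 1 = B := by simp [hYdef]
    have : ∑ i ∈ Finset.Ico 1 n, Y (i + 1)
        = ∑ i ∈ Finset.Ico 1 n, min (l i / v2 * wI) (2 * r0 / (v1 + v2) * wV) := by
      refine Finset.sum_congr rfl fun i hi => ?_
      exact hYsucc i (Finset.mem_Ico.mp hi).1
    rw [hY1, this]
    linarith
end

section
/- If $0 < w_I \le \frac{r_0 w_V v_2}{r_I(v_1+v_2)}$ and $r_I > r_0 > 0$, then for every real $l \ge 0$: $\frac{\min\{l, 2r_I\}}{v_2} w_I \le \frac{\min\{l, 2r_0\}}{v_1+v_2} w_V$. -/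
theorem stmt15 (rI r0 v1 v2 wI wV l : ℝ)
    (hr0 : 0 < r0) (hrIr0 : r0 < rI) (hv1 : 0 < v1) (hv2 : 0 < v2)
    (hwI : 0 < wI) (hwV : 0 < wV)
    (hwIle : wI ≤ r0 * wV * v2 / (rI * (v1 + v2))) (hl : 0 ≤ l) :
    min l (2 * rI) / v2 * wI ≤ min l (2 * r0) / (v1 + v2) * wV := by
  have hrI : (0:ℝ) < rI := hr0.trans hrIr0
  have hv12 : (0:ℝ) < v1 + v2 := by linarith
  have hden : (0:ℝ) < rI * (v1 + v2) := by positivity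
  have hwI' : wI * (rI * (v1 + v2)) ≤ r0 * wV * v2 := by
    rwa [div_eq_mul_inv, ← div_eq_mul_inv, le_div_iff₀ hden] at hwIle
  have hm1 : 0 ≤ min l (2 * rI) := le_min hl (by positivity)
  have key : min l (2 * rI) * r0 ≤ min l (2 * r0) * rI := by
    rcases le_total l (2 * r0) with h | h
    · rw [min_eq_left h, min_eq_left (by linarith)]
      nlinarith
    · rw [min_eq_right h]
      rcases le_total l (2 * rI) with h2 | h2
      · rw [min_eq_left h2]; nlinarith
      · rw [min_eq_right h2]; nlinarith
  rw [div_mul_eq_mul_div, div_mul_eq_mul_div, div_le_div_iff₀ hv2 hv12]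
  nlinarith [mul_le_mul_of_nonneg_left hwI' hm1, mul_le_mul_of_nonneg_right key (mul_pos hwV hv2).le]
end
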